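/- Let d ≥ 1 be an integer, s ≥ 0 and α ∈ (0,1). There exist C > 0 and δ₀ ∈ (0,1) such that for all δ ∈ (0, δ₀], ‖⟨x⟩^s Δ(f_δ^α)‖_{L²(ℝ^d)} ≤ C δ^{α − 1 − d/4}, where Δ denotes the Laplacian and ⟨x⟩ = √(1+|x|²). -/

import Mathlib

open MeasureTheory Real

/-- The Laplacian `Δu = ∑_j ∂²u/∂x_j²` of a function on `ℝ^d`. -/
noncomputable def laplacian (d : ℕ) (u : EuclideanSpace ℝ (Fin d) → ℝ)
    (x : EuclideanSpace ℝ (Fin d)) : ℝ :=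
  ∑ j : Fin d,
    fderiv ℝ (fun y => fderiv ℝ u y (EuclideanSpace.single j 1)) x
      (EuclideanSpace.single j 1)

/-- The forcing term `f_δ(x) = 1 - e^{-δ} e^{-|x|²/2}`. -/
noncomputable def fδ (d : ℕ) (δ : ℝ) (x : EuclideanSpace ℝ (Fin d)) : ℝ :=
  1 - Real.exp (-δ) * Real.exp (-‖x‖ ^ 2 / 2)


noncomputable def F (c α : ℝ) (t : ℝ) : ℝ := (1 - c * Real.exp (-t / 2)) ^ α

noncomputable def F1 (c α : ℝ) (t : ℝ) : ℝ :=
  α * (1 - c * Real.exp (-t / 2)) ^ (α - 1) * (c / 2 * Real.exp (-t / 2))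

noncomputable def F2 (c α : ℝ) (t : ℝ) : ℝ :=
  α * (α - 1) * (1 - c * Real.exp (-t / 2)) ^ (α - 2) * (c / 2 * Real.exp (-t / 2)) ^ 2
    + α * (1 - c * Real.exp (-t / 2)) ^ (α - 1) * (-(c / 4) * Real.exp (-t / 2))

lemma hasDerivAt_base (c t : ℝ) :
    HasDerivAt (fun t : ℝ => 1 - c * Real.exp (-t / 2)) (c / 2 * Real.exp (-t / 2)) t := by
  have h : HasDerivAt (fun t : ℝ => -t / 2) (-1 / 2) t := by
    simpa using ((hasDerivAt_id t).neg.div_const 2)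
  have h2 := (h.exp).const_mul c
  have h3 := (hasDerivAt_const t (1 : ℝ)).sub h2
  refine h3.congr_deriv ?_
  ring

lemma hasDerivAt_F {c α t : ℝ} (hpos : 0 < 1 - c * Real.exp (-t / 2)) :
    HasDerivAt (F c α) (F1 c α t) t := by
  have h := (hasDerivAt_base c t).rpow_const (p := α) (Or.inl hpos.ne')
  refine h.congr_deriv ?_
  unfold F1; ring

lemma hasDerivAt_F1 {c α t : ℝ} (hpos : 0 < 1 - c * Real.exp (-t / 2)) :
    HasDerivAt (F1 c α) (F2 c α t) t := by
  have hb := hasDerivAt_base c t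
  have h1 := hb.rpow_const (p := α - 1) (Or.inl hpos.ne')
  have hexp : HasDerivAt (fun t : ℝ => c / 2 * Real.exp (-t / 2))
      (-(c / 4) * Real.exp (-t / 2)) t := by
    have h : HasDerivAt (fun t : ℝ => -t / 2) (-1 / 2) t := by
      simpa using ((hasDerivAt_id t).neg.div_const 2)
    have := (h.exp).const_mul (c / 2)
    refine this.congr_deriv ?_; ring
  have h2 := (h1.mul hexp).const_mul α
  rw [show F1 c α = (fun y => α * ((fun y => (1 - c * Real.exp (-y / 2)) ^ (α - 1)) *
      fun t => c / 2 * Real.exp (-t / 2)) y) by funext y; unfold F1; simp only [Pi.mul_apply]; ring]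
  refine h2.congr_deriv ?_
  unfold F2
  rw [show α - 1 - 1 = α - 2 by ring]
  ring

lemma base_pos {c : ℝ} (hc1 : c < 1) {t : ℝ} (ht : 0 ≤ t) :
    0 < 1 - c * Real.exp (-t / 2) := by
  have h1 : Real.exp (-t / 2) ≤ 1 := Real.exp_le_one_iff.mpr (by linarith)
  have h2 : 0 < Real.exp (-t / 2) := Real.exp_pos _
  nlinarith

lemma norm_sq_hasFDerivAt {d : ℕ} (y : EuclideanSpace ℝ (Fin d)) :
    HasFDerivAt (fun z : EuclideanSpace ℝ (Fin d) => ‖z‖ ^ 2) (2 • innerSL ℝ y) y := by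
  simpa using (hasFDerivAt_id y).norm_sq

lemma laplacian_radial_eq {d : ℕ} {c α : ℝ} (hc1 : c < 1)
    (x : EuclideanSpace ℝ (Fin d)) :
    laplacian d (fun y => F c α (‖y‖ ^ 2)) x
      = 2 * d * F1 c α (‖x‖ ^ 2) + 4 * ‖x‖ ^ 2 * F2 c α (‖x‖ ^ 2) := by
  have hu : ∀ y : EuclideanSpace ℝ (Fin d),
      HasFDerivAt (fun y : EuclideanSpace ℝ (Fin d) => F c α (‖y‖ ^ 2))
        (F1 c α (‖y‖ ^ 2) • (2 • innerSL ℝ y)) y := fun y =>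
    by have := (hasDerivAt_F (c := c) (α := α) (base_pos hc1 (sq_nonneg ‖y‖))).comp_hasFDerivAt y (norm_sq_hasFDerivAt y); exact this
  have hgrad : ∀ (j : Fin d) (y : EuclideanSpace ℝ (Fin d)),
      fderiv ℝ (fun y : EuclideanSpace ℝ (Fin d) => F c α (‖y‖ ^ 2)) y
          (EuclideanSpace.single j 1)
        = F1 c α (‖y‖ ^ 2) * (2 * y j) := by
    intro j y
    rw [(hu y).fderiv]
    simp only [ContinuousLinearMap.smul_apply, ContinuousLinearMap.coe_smul',
      Pi.smul_apply, innerSL_apply_apply, smul_eq_mul]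
    rw [EuclideanSpace.inner_single_right]
    simp
  have hsec : ∀ j : Fin d,
      fderiv ℝ (fun y : EuclideanSpace ℝ (Fin d) =>
          fderiv ℝ (fun z : EuclideanSpace ℝ (Fin d) => F c α (‖z‖ ^ 2)) y
            (EuclideanSpace.single j 1)) x
        (EuclideanSpace.single j 1)
      = 2 * F1 c α (‖x‖ ^ 2) + 4 * (x j) ^ 2 * F2 c α (‖x‖ ^ 2) := by
    intro j
    have heq : (fun y : EuclideanSpace ℝ (Fin d) =>
          fderiv ℝ (fun z : EuclideanSpace ℝ (Fin d) => F c α (‖z‖ ^ 2)) y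
            (EuclideanSpace.single j 1))
        = fun y : EuclideanSpace ℝ (Fin d) => F1 c α (‖y‖ ^ 2) * (2 * y j) :=
      funext (hgrad j)
    have h1 : HasFDerivAt (fun y : EuclideanSpace ℝ (Fin d) => F1 c α (‖y‖ ^ 2))
        (F2 c α (‖x‖ ^ 2) • (2 • innerSL ℝ x)) x :=
      by have := (hasDerivAt_F1 (c := c) (α := α) (base_pos hc1 (sq_nonneg ‖x‖))).comp_hasFDerivAt x (norm_sq_hasFDerivAt x); exact this
    have h2 : HasFDerivAt (fun y : EuclideanSpace ℝ (Fin d) => 2 * y j)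
        ((2 : ℝ) • (EuclideanSpace.proj j : EuclideanSpace ℝ (Fin d) →L[ℝ] ℝ)) x :=
      ((EuclideanSpace.proj (𝕜 := ℝ) j).hasFDerivAt.const_mul 2)
    have h3 := h1.mul h2
    rw [heq, show (fun y : EuclideanSpace ℝ (Fin d) => F1 c α (‖y‖ ^ 2) * (2 * y j))
      = (fun y : EuclideanSpace ℝ (Fin d) => F1 c α (‖y‖ ^ 2)) * (fun y => 2 * y j) from rfl, h3.fderiv]
    simp only [ContinuousLinearMap.add_apply, ContinuousLinearMap.smul_apply,
      ContinuousLinearMap.coe_smul', Pi.smul_apply, innerSL_apply_apply, smul_eq_mul,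
      PiLp.proj_apply, EuclideanSpace.single_apply]
    rw [EuclideanSpace.inner_single_right]
    simp
    ring
  have hnorm : ∑ j : Fin d, (x j) ^ 2 = ‖x‖ ^ 2 := by
    rw [PiLp.norm_sq_eq_of_L2]
    simp [Real.norm_eq_abs, sq_abs]
  unfold laplacian
  rw [Finset.sum_congr rfl (fun j _ => hsec j)]
  rw [Finset.sum_add_distrib, Finset.sum_const]
  simp only [Finset.card_univ, Fintype.card_fin, nsmul_eq_mul]
  rw [show ∑ j : Fin d, 4 * (x j) ^ 2 * F2 c α (‖x‖ ^ 2)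
      = (∑ j : Fin d, (x j) ^ 2) * (4 * F2 c α (‖x‖ ^ 2)) by
    rw [Finset.sum_mul]
    exact Finset.sum_congr rfl fun j _ => by ring]
  rw [hnorm]
  ring

set_option maxHeartbeats 1000000 in
lemma bound_scalar (d : ℕ) {α δ : ℝ} (hα0 : 0 < α) (hα1 : α < 1)
    (hδ0 : 0 < δ) (hδ1 : δ ≤ 1) {t : ℝ} (ht : 0 ≤ t) :
    |2 * (d : ℝ) * F1 (Real.exp (-δ)) α t + 4 * t * F2 (Real.exp (-δ)) α t|
      ≤ ((d : ℝ) * α * 2 ^ (1 - α) + α * 2 ^ (1 - α)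
          + α * (1 - α) * (2 ^ ((2 : ℝ) - α) + 2 * 2 ^ (1 + (d : ℝ) / 4 - α)))
        * δ ^ (α - 1 - (d : ℝ) / 4) * ((1 + t) * Real.exp (-t / 2)) := by
  have hA : (0 : ℝ) ≤ (d : ℝ) := Nat.cast_nonneg d
  set E : ℝ := α - 1 - (d : ℝ) / 4 with hE
  set c : ℝ := Real.exp (-δ) with hc
  set g : ℝ := Real.exp (-t / 2) with hg
  have hc0 : 0 < c := Real.exp_pos _
  have hc1 : c < 1 := by
    rw [hc, ← Real.exp_zero]
    exact Real.exp_lt_exp.mpr (by linarith)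
  have hg0 : 0 < g := Real.exp_pos _
  have hg1 : g ≤ 1 := by
    rw [hg, ← Real.exp_zero]
    exact Real.exp_le_exp.mpr (by linarith)
  set f : ℝ := 1 - c * g with hf
  have hf0 : 0 < f := by nlinarith
  -- f ≥ δ/2
  have hexp1 : δ + 1 ≤ Real.exp δ := Real.add_one_le_exp δ
  have hexp2 : c * Real.exp δ = 1 := by rw [hc, ← Real.exp_add]; simp
  have hcδ : c ≤ 1 - δ / 2 := by nlinarith [Real.exp_pos δ]
  have hfδ : δ / 2 ≤ f := by nlinarith
  -- f ≥ (t/2) * g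
  have hexp3 : t / 2 + 1 ≤ Real.exp (t / 2) := Real.add_one_le_exp _
  have hexp4 : g * Real.exp (t / 2) = 1 := by rw [hg, ← Real.exp_add]; ring_nf; simp
  have hftg : t / 2 * g ≤ f := by nlinarith [mul_le_mul_of_nonneg_left hexp3 hg0.le]
  set P1 : ℝ := f ^ (α - 1) with hP1def
  set P2 : ℝ := f ^ (α - 2) with hP2def
  have hP1 : 0 ≤ P1 := Real.rpow_nonneg hf0.le _
  have hP2 : 0 ≤ P2 := Real.rpow_nonneg hf0.le _
  have hδE : 0 < δ ^ E := Real.rpow_pos_of_pos hδ0 _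
  have hhalf : ∀ β : ℝ, (δ / 2) ^ β = δ ^ β * 2 ^ (-β) := by
    intro β
    rw [Real.div_rpow hδ0.le (by norm_num), Real.rpow_neg (by norm_num), div_eq_mul_inv]
  clear_value E c g f P1 P2
  -- P1 bound
  have hP1b : P1 ≤ 2 ^ (1 - α) * δ ^ E := by
    rw [hP1def]
    have h1 : f ^ (α - 1) ≤ (δ / 2) ^ (α - 1) :=
      Real.rpow_le_rpow_of_nonpos (half_pos hδ0) hfδ (by linarith)
    have h2 : δ ^ (α - 1) ≤ δ ^ E :=
      Real.rpow_le_rpow_of_exponent_ge hδ0 hδ1 (by rw [hE]; nlinarith)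
    rw [hhalf (α - 1), show -(α - 1) = 1 - α by ring] at h1
    have h3 : (0 : ℝ) ≤ (2:ℝ) ^ (1 - α) := Real.rpow_nonneg (by norm_num) _
    calc f ^ (α - 1) ≤ δ ^ (α - 1) * 2 ^ (1 - α) := h1
      _ ≤ δ ^ E * 2 ^ (1 - α) := mul_le_mul_of_nonneg_right h2 h3
      _ = 2 ^ (1 - α) * δ ^ E := mul_comm _ _
  -- P2 bound
  have hP2b : P2 * g ^ 2 * t
      ≤ (2 ^ ((2 : ℝ) - α) + 2 * 2 ^ (1 + (d : ℝ) / 4 - α)) * δ ^ E * ((1 + t) * g) := by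
    have hC2a : (0 : ℝ) ≤ 2 ^ ((2 : ℝ) - α) := Real.rpow_nonneg (by norm_num) _
    have hC2b : (0 : ℝ) ≤ 2 * 2 ^ (1 + (d : ℝ) / 4 - α) :=
      mul_nonneg (by norm_num) (Real.rpow_nonneg (by norm_num) _)
    rcases le_or_gt 1 ((d : ℝ) / 4) with hd4 | hd4
    · -- d ≥ 4 : crude bound
      have h1 : f ^ (α - 2) ≤ (δ / 2) ^ (α - 2) :=
        Real.rpow_le_rpow_of_nonpos (half_pos hδ0) hfδ (by linarith)
      have h2 : δ ^ (α - 2) ≤ δ ^ E :=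
        Real.rpow_le_rpow_of_exponent_ge hδ0 hδ1 (by rw [hE]; linarith)
      rw [hhalf (α - 2), show -(α - 2) = (2:ℝ) - α by ring] at h1
      have h5 : P2 ≤ 2 ^ ((2 : ℝ) - α) * δ ^ E := by
        rw [hP2def]
        calc f ^ (α - 2) ≤ δ ^ (α - 2) * 2 ^ ((2:ℝ) - α) := h1
          _ ≤ δ ^ E * 2 ^ ((2:ℝ) - α) := mul_le_mul_of_nonneg_right h2 hC2a
          _ = 2 ^ ((2:ℝ) - α) * δ ^ E := mul_comm _ _
      -- g^2 * t ≤ (1+t)*g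
      have h6 : g ^ 2 * t ≤ (1 + t) * g := by nlinarith
      have h7 : 0 ≤ g ^ 2 * t := by positivity
      have h8 : 0 ≤ (1 + t) * g := by positivity
      linarith [mul_le_mul h5 h6 h7 (by positivity),
        mul_nonneg (mul_nonneg hC2b hδE.le) h8]
    · -- d < 4 : interpolation
      rcases eq_or_lt_of_le ht with rfl | ht0
      · have hrhs : (0:ℝ) ≤ (2 ^ ((2:ℝ) - α) + 2 * 2 ^ (1 + (d:ℝ)/4 - α)) * δ ^ E
            * ((1 + 0) * g) :=
          mul_nonneg (mul_nonneg (by positivity) hδE.le) (by nlinarith)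
        simpa using hrhs
      have htg0 : 0 < t / 2 * g := by positivity
      have hsplit : P2 = f ^ E * f ^ ((d : ℝ) / 4 - 1) := by
        rw [hP2def, ← Real.rpow_add hf0]
        congr 1
        rw [hE]; ring
      have hfE : f ^ E ≤ 2 ^ (1 + (d : ℝ) / 4 - α) * δ ^ E := by
        have h1 : f ^ E ≤ (δ / 2) ^ E :=
          Real.rpow_le_rpow_of_nonpos (half_pos hδ0) hfδ (by rw [hE]; nlinarith)
        rw [hhalf E, show -E = 1 + (d : ℝ) / 4 - α by rw [hE]; ring] at h1
        calc f ^ E ≤ δ ^ E * 2 ^ (1 + (d : ℝ) / 4 - α) := h1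
          _ = 2 ^ (1 + (d : ℝ) / 4 - α) * δ ^ E := mul_comm _ _
      have hfd : f ^ ((d : ℝ) / 4 - 1) ≤ (t / 2) ^ ((d : ℝ) / 4 - 1) * g ^ ((d : ℝ) / 4 - 1) := by
        rw [← Real.mul_rpow (by positivity) hg0.le]
        exact Real.rpow_le_rpow_of_nonpos htg0 hftg (by linarith)
      -- algebra: (t/2)^{d/4-1} * g^{d/4-1} * g^2 * t = 2 * (t/2)^{d/4} * g^{d/4+1}
      have halg : (t / 2) ^ ((d : ℝ) / 4 - 1) * g ^ ((d : ℝ) / 4 - 1) * g ^ 2 * t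
          = 2 * ((t / 2) ^ ((d : ℝ) / 4) * g ^ ((d : ℝ) / 4 + 1)) := by
        have e1 : (t / 2) ^ ((d : ℝ) / 4) = (t / 2) ^ ((d : ℝ) / 4 - 1) * (t / 2) := by
          have h := Real.rpow_add_one (x := t / 2) (by positivity) ((d : ℝ) / 4 - 1)
          rw [show (d : ℝ) / 4 - 1 + 1 = (d : ℝ) / 4 by ring] at h
          exact h
        have e2 : g ^ ((d : ℝ) / 4 + 1) = g ^ ((d : ℝ) / 4 - 1) * g ^ 2 := by
          rw [← Real.rpow_natCast g 2, ← Real.rpow_add hg0]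
          congr 1
          push_cast; ring
        rw [e1, e2]; ring
      have hb1 : (t / 2) ^ ((d : ℝ) / 4) ≤ 1 + t := by
        calc (t / 2) ^ ((d : ℝ) / 4) ≤ (1 + t) ^ ((d : ℝ) / 4) :=
              Real.rpow_le_rpow (by positivity) (by linarith) (by positivity)
          _ ≤ (1 + t) ^ (1 : ℝ) :=
              Real.rpow_le_rpow_of_exponent_le (by linarith) (by linarith)
          _ = 1 + t := Real.rpow_one _
      have hb2 : g ^ ((d : ℝ) / 4 + 1) ≤ g := by
        calc g ^ ((d : ℝ) / 4 + 1) ≤ g ^ (1 : ℝ) :=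
              Real.rpow_le_rpow_of_exponent_ge hg0 hg1 (by linarith)
          _ = g := Real.rpow_one _
      -- combine
      have step1 : P2 * g ^ 2 * t
          ≤ (2 ^ (1 + (d : ℝ) / 4 - α) * δ ^ E)
            * ((t / 2) ^ ((d : ℝ) / 4 - 1) * g ^ ((d : ℝ) / 4 - 1)) * g ^ 2 * t := by
        rw [hsplit]
        have hnn1 : 0 ≤ f ^ ((d : ℝ) / 4 - 1) := Real.rpow_nonneg hf0.le _
        have hnn2 : 0 ≤ g ^ 2 * t := by positivity
        have hnn3 : 0 ≤ (t / 2) ^ ((d : ℝ) / 4 - 1) * g ^ ((d : ℝ) / 4 - 1) := by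
          exact mul_nonneg (Real.rpow_nonneg (by positivity) _) (Real.rpow_nonneg hg0.le _)
        have := mul_le_mul hfE hfd hnn1 (by positivity)
        linarith [mul_le_mul_of_nonneg_right this hnn2]
      have step2 : (2 ^ (1 + (d : ℝ) / 4 - α) * δ ^ E)
            * ((t / 2) ^ ((d : ℝ) / 4 - 1) * g ^ ((d : ℝ) / 4 - 1)) * g ^ 2 * t
          = (2 * 2 ^ (1 + (d : ℝ) / 4 - α)) * δ ^ E
            * ((t / 2) ^ ((d : ℝ) / 4) * g ^ ((d : ℝ) / 4 + 1)) := by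
        linear_combination (2 ^ (1 + (d : ℝ) / 4 - α) * δ ^ E) * halg
      have step3 : (t / 2) ^ ((d : ℝ) / 4) * g ^ ((d : ℝ) / 4 + 1) ≤ (1 + t) * g := by
        have hnn4 : 0 ≤ (t / 2) ^ ((d : ℝ) / 4) := Real.rpow_nonneg (by positivity) _
        have hnn5 : 0 ≤ g ^ ((d : ℝ) / 4 + 1) := Real.rpow_nonneg hg0.le _
        exact mul_le_mul hb1 hb2 hnn5 (by positivity)
      have hK2 : 0 ≤ (2 * 2 ^ (1 + (d : ℝ) / 4 - α)) * δ ^ E := mul_nonneg hC2b hδE.le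
      calc P2 * g ^ 2 * t
          ≤ (2 * 2 ^ (1 + (d : ℝ) / 4 - α)) * δ ^ E
              * ((t / 2) ^ ((d : ℝ) / 4) * g ^ ((d : ℝ) / 4 + 1)) := by
            rw [← step2]; exact step1
        _ ≤ (2 * 2 ^ (1 + (d : ℝ) / 4 - α)) * δ ^ E * ((1 + t) * g) :=
            mul_le_mul_of_nonneg_left step3 hK2
        _ ≤ (2 ^ ((2 : ℝ) - α) + 2 * 2 ^ (1 + (d : ℝ) / 4 - α)) * δ ^ E * ((1 + t) * g) := by
            linarith [mul_nonneg (mul_nonneg hC2a hδE.le) (show (0:ℝ) ≤ (1+t)*g by positivity)]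
  -- expand and triangle inequality
  have hexpand : 2 * (d : ℝ) * F1 c α t + 4 * t * F2 c α t
      = (d : ℝ) * α * c * P1 * g - α * c * P1 * g * t + α * (α - 1) * c ^ 2 * P2 * g ^ 2 * t := by
    simp only [F1, F2, ← hg, ← hf, ← hP1def, ← hP2def]
    ring
  rw [hexpand]
  have hX1a : (d : ℝ) * α * c * P1 * g ≤ (d : ℝ) * α * P1 * g := by
    linarith [mul_nonneg (mul_nonneg (mul_nonneg (mul_nonneg hA hα0.le) hP1) hg0.le)
      (sub_nonneg.mpr hc1.le)]
  have hX1b : 0 ≤ (d : ℝ) * α * c * P1 * g := by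
    exact mul_nonneg (mul_nonneg (mul_nonneg (mul_nonneg hA hα0.le) hc0.le) hP1) hg0.le
  have hX2a : α * c * P1 * g * t ≤ α * P1 * g * t := by
    linarith [mul_nonneg (mul_nonneg (mul_nonneg (mul_nonneg hα0.le hP1) hg0.le) ht)
      (sub_nonneg.mpr hc1.le)]
  have hX2b : 0 ≤ α * c * P1 * g * t :=
    mul_nonneg (mul_nonneg (mul_nonneg (mul_nonneg hα0.le hc0.le) hP1) hg0.le) ht
  have hc2 : c ^ 2 ≤ 1 := pow_le_one₀ hc0.le hc1.le
  have hX3a : -(α * (1 - α) * (P2 * g ^ 2 * t)) ≤ α * (α - 1) * c ^ 2 * P2 * g ^ 2 * t := by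
    linarith [mul_nonneg (mul_nonneg (mul_nonneg (mul_nonneg hα0.le (sub_nonneg.mpr hα1.le))
      hP2) (mul_nonneg (sq_nonneg g) ht)) (sub_nonneg.mpr hc2)]
  have hX3b : α * (α - 1) * c ^ 2 * P2 * g ^ 2 * t ≤ 0 := by
    linarith [mul_nonneg (mul_nonneg (mul_nonneg (mul_nonneg (mul_nonneg hα0.le
      (sub_nonneg.mpr hα1.le)) (sq_nonneg c)) hP2) (sq_nonneg g)) ht]
  have habs : |(d : ℝ) * α * c * P1 * g - α * c * P1 * g * t
        + α * (α - 1) * c ^ 2 * P2 * g ^ 2 * t|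
      ≤ (d : ℝ) * α * P1 * g + α * P1 * g * t + α * (1 - α) * (P2 * g ^ 2 * t) := by
    rw [abs_le]
    constructor
    · linarith [mul_nonneg (mul_nonneg (mul_nonneg hA hα0.le) hP1) hg0.le]
    · linarith [mul_nonneg (mul_nonneg (mul_nonneg hP2 (sq_nonneg g)) ht)
        (mul_nonneg hα0.le (sub_nonneg.mpr hα1.le))]
  refine le_trans habs ?_
  -- now assemble
  have h2a : (0 : ℝ) ≤ 2 ^ (1 - α) := Real.rpow_nonneg (by norm_num) _
  have hterm1 : (d : ℝ) * α * P1 * g ≤ (d : ℝ) * α * 2 ^ (1 - α) * δ ^ E * ((1 + t) * g) := by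
    have h1 : P1 * g ≤ (2 ^ (1 - α) * δ ^ E) * ((1 + t) * g) := by
      linarith [mul_le_mul_of_nonneg_right hP1b hg0.le,
        mul_nonneg (mul_nonneg h2a hδE.le) (mul_nonneg ht hg0.le)]
    linarith [mul_le_mul_of_nonneg_left h1 (mul_nonneg hA hα0.le)]
  have hterm2 : α * P1 * g * t ≤ α * 2 ^ (1 - α) * δ ^ E * ((1 + t) * g) := by
    have h1 : P1 * (g * t) ≤ (2 ^ (1 - α) * δ ^ E) * ((1 + t) * g) := by
      linarith [mul_le_mul_of_nonneg_right hP1b (mul_nonneg hg0.le ht),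
        mul_nonneg (mul_nonneg h2a hδE.le) hg0.le]
    linarith [mul_le_mul_of_nonneg_left h1 hα0.le]
  have hterm3 : α * (1 - α) * (P2 * g ^ 2 * t)
      ≤ α * (1 - α) * (2 ^ ((2 : ℝ) - α) + 2 * 2 ^ (1 + (d : ℝ) / 4 - α)) * δ ^ E
        * ((1 + t) * g) := by
    linarith [mul_le_mul_of_nonneg_left hP2b (mul_nonneg hα0.le (sub_nonneg.mpr hα1.le))]
  linarith [hterm1, hterm2, hterm3]


lemma integrable_gauss (d : ℕ) :
    Integrable (fun x : EuclideanSpace ℝ (Fin d) => Real.exp (-‖x‖ ^ 2 / 2)) := by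
  have h := (GaussianFourier.integrable_cexp_neg_mul_sq_norm_add
    (V := EuclideanSpace ℝ (Fin d)) (b := (1/2 : ℂ)) (by norm_num) 0 0).norm
  refine h.congr (Filter.Eventually.of_forall fun x => ?_)
  show ‖Complex.exp _‖ = _
  rw [Complex.norm_exp]
  congr 1
  simp [Complex.add_re, Complex.mul_re, ← Complex.ofReal_pow]
  ring


lemma poly_gauss_bound {s t : ℝ} (hs : 0 ≤ s) (ht : 0 ≤ t) (m : ℕ) (hm : s + 2 ≤ (m : ℝ))
    (hm2 : 2 ≤ m) :
    (1 + t) ^ (s + 2) * Real.exp (-t) ≤ (2 * m) ^ (m : ℝ) * Real.exp (-t / 2) := by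
  have hm0 : (0 : ℝ) < (m : ℝ) := Nat.cast_pos.mpr (by omega)
  have h1 : (1 + t) ^ (s + 2) ≤ (1 + t) ^ (m : ℝ) :=
    Real.rpow_le_rpow_of_exponent_le (by linarith) hm
  have h2 : 1 + t ≤ 2 * m * Real.exp (t / (2 * m)) := by
    have he := Real.add_one_le_exp (t / (2 * m))
    have hcancel : 2 * (m:ℝ) * (t / (2 * m)) = t := by field_simp
    linarith [mul_le_mul_of_nonneg_left he (by positivity : (0:ℝ) ≤ 2 * (m:ℝ)), hcancel]
  have h3 : (1 + t) ^ (m : ℝ) ≤ (2 * m * Real.exp (t / (2 * m))) ^ (m : ℝ) :=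
    Real.rpow_le_rpow (by linarith) h2 (by positivity)
  have h4 : (2 * m * Real.exp (t / (2 * m))) ^ (m : ℝ)
      = (2 * m) ^ (m : ℝ) * Real.exp (t / 2) := by
    rw [Real.mul_rpow (by positivity) (Real.exp_pos _).le, ← Real.exp_mul]
    congr 1
    field_simp
  have h5 : (1 + t) ^ (s + 2) ≤ (2 * m) ^ (m : ℝ) * Real.exp (t / 2) := by
    rw [← h4]; exact le_trans h1 h3
  have h6 : Real.exp (t / 2) * Real.exp (-t) = Real.exp (-t / 2) := by
    rw [← Real.exp_add]; congr 1; ring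
  calc (1 + t) ^ (s + 2) * Real.exp (-t)
      ≤ ((2 * m) ^ (m : ℝ) * Real.exp (t / 2)) * Real.exp (-t) :=
        mul_le_mul_of_nonneg_right h5 (Real.exp_pos _).le
    _ = (2 * m) ^ (m : ℝ) * Real.exp (-t / 2) := by rw [mul_assoc, h6]


theorem stmt_9 (d : ℕ) (hd : 1 ≤ d) (s : ℝ) (hs : 0 ≤ s) (α : ℝ)
    (hα : α ∈ Set.Ioo (0 : ℝ) 1) :
    ∃ C : ℝ, 0 < C ∧ ∃ δ₀ ∈ Set.Ioo (0 : ℝ) 1, ∀ δ ∈ Set.Ioc (0 : ℝ) δ₀,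
      Real.sqrt (∫ x : EuclideanSpace ℝ (Fin d),
          ((1 + ‖x‖ ^ 2) ^ (s / 2) * laplacian d (fun y => fδ d δ y ^ α) x) ^ 2) ≤
        C * δ ^ (α - 1 - d / 4) := by
  obtain ⟨hα0, hα1⟩ := hα
  set E : ℝ := α - 1 - (d : ℝ) / 4 with hE
  set K : ℝ := (d : ℝ) * α * 2 ^ (1 - α) + α * 2 ^ (1 - α)
      + α * (1 - α) * (2 ^ ((2 : ℝ) - α) + 2 * 2 ^ (1 + (d : ℝ) / 4 - α)) with hK
  set m : ℕ := ⌈s⌉₊ + 2 with hmdef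
  have hm : s + 2 ≤ (m : ℝ) := by
    rw [hmdef]; push_cast; linarith [Nat.le_ceil s]
  have hm2 : 2 ≤ m := by rw [hmdef]; omega
  set J : ℝ := ∫ x : EuclideanSpace ℝ (Fin d), Real.exp (-‖x‖ ^ 2 / 2) with hJ
  have hJ0 : 0 ≤ J := integral_nonneg fun x => (Real.exp_pos _).le
  set B : ℝ := K ^ 2 * (2 * m) ^ (m : ℝ) * J with hB
  have hB0 : 0 ≤ B :=
    mul_nonneg (mul_nonneg (sq_nonneg K) (Real.rpow_nonneg (by positivity) _)) hJ0
  have hC0 : 0 < Real.sqrt B + 1 := by positivity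
  refine ⟨Real.sqrt B + 1, hC0, 1/2, by norm_num, ?_⟩
  intro δ hδ
  obtain ⟨hδ0, hδhalf⟩ := hδ
  have hδ1 : δ ≤ 1 := le_trans hδhalf (by norm_num)
  have hδE : 0 < δ ^ E := Real.rpow_pos_of_pos hδ0 _
  have hc1 : Real.exp (-δ) < 1 := by
    rw [← Real.exp_zero]; exact Real.exp_lt_exp.mpr (by linarith)
  have hfun : (fun y : EuclideanSpace ℝ (Fin d) => fδ d δ y ^ α)
      = fun y => F (Real.exp (-δ)) α (‖y‖ ^ 2) := rfl
  have hpt : ∀ x : EuclideanSpace ℝ (Fin d),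
      ((1 + ‖x‖ ^ 2) ^ (s / 2) * laplacian d (fun y => fδ d δ y ^ α) x) ^ 2
        ≤ (K ^ 2 * (2 * m) ^ (m : ℝ) * (δ ^ E) ^ 2) * Real.exp (-‖x‖ ^ 2 / 2) := by
    intro x
    have hq : (0 : ℝ) ≤ ‖x‖ ^ 2 := sq_nonneg _
    have h1q : (0 : ℝ) < 1 + ‖x‖ ^ 2 := by linarith
    have hlap : |laplacian d (fun y => fδ d δ y ^ α) x|
        ≤ K * δ ^ E * ((1 + ‖x‖ ^ 2) * Real.exp (-‖x‖ ^ 2 / 2)) := by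
      rw [hfun, laplacian_radial_eq hc1 x]
      exact bound_scalar d hα0 hα1 hδ0 hδ1 hq
    have h1 : ((1 + ‖x‖ ^ 2) ^ (s / 2) * laplacian d (fun y => fδ d δ y ^ α) x) ^ 2
        = (1 + ‖x‖ ^ 2) ^ s * (laplacian d (fun y => fδ d δ y ^ α) x) ^ 2 := by
      rw [mul_pow, ← Real.rpow_natCast ((1 + ‖x‖ ^ 2) ^ (s / 2)) 2,
        ← Real.rpow_mul h1q.le]
      norm_num
    have h2 : (laplacian d (fun y => fδ d δ y ^ α) x) ^ 2
        ≤ (K * δ ^ E * ((1 + ‖x‖ ^ 2) * Real.exp (-‖x‖ ^ 2 / 2))) ^ 2 := by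
      rw [← sq_abs (laplacian d (fun y => fδ d δ y ^ α) x)]
      exact pow_le_pow_left₀ (abs_nonneg _) hlap 2
    have hs0 : (0 : ℝ) ≤ (1 + ‖x‖ ^ 2) ^ s := Real.rpow_nonneg h1q.le _
    have hsq2 : (1 + ‖x‖ ^ 2) ^ s * (1 + ‖x‖ ^ 2) ^ 2 = (1 + ‖x‖ ^ 2) ^ (s + 2) := by
      rw [← Real.rpow_natCast (1 + ‖x‖ ^ 2) 2, ← Real.rpow_add h1q]
      norm_num
    have hg2 : Real.exp (-‖x‖ ^ 2 / 2) ^ 2 = Real.exp (-‖x‖ ^ 2) := by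
      rw [sq, ← Real.exp_add]; congr 1; ring
    have hKnn : (0 : ℝ) ≤ K ^ 2 * (δ ^ E) ^ 2 := mul_nonneg (sq_nonneg _) (sq_nonneg _)
    calc ((1 + ‖x‖ ^ 2) ^ (s / 2) * laplacian d (fun y => fδ d δ y ^ α) x) ^ 2
        = (1 + ‖x‖ ^ 2) ^ s * (laplacian d (fun y => fδ d δ y ^ α) x) ^ 2 := h1
      _ ≤ (1 + ‖x‖ ^ 2) ^ s
            * (K * δ ^ E * ((1 + ‖x‖ ^ 2) * Real.exp (-‖x‖ ^ 2 / 2))) ^ 2 :=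
          mul_le_mul_of_nonneg_left h2 hs0
      _ = (K ^ 2 * (δ ^ E) ^ 2)
            * (((1 + ‖x‖ ^ 2) ^ s * (1 + ‖x‖ ^ 2) ^ 2) * Real.exp (-‖x‖ ^ 2 / 2) ^ 2) := by
          ring
      _ = (K ^ 2 * (δ ^ E) ^ 2) * ((1 + ‖x‖ ^ 2) ^ (s + 2) * Real.exp (-‖x‖ ^ 2)) := by
          rw [hsq2, hg2]
      _ ≤ (K ^ 2 * (δ ^ E) ^ 2) * ((2 * m) ^ (m : ℝ) * Real.exp (-‖x‖ ^ 2 / 2)) :=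
          mul_le_mul_of_nonneg_left (poly_gauss_bound hs hq m hm hm2) hKnn
      _ = (K ^ 2 * (2 * m) ^ (m : ℝ) * (δ ^ E) ^ 2) * Real.exp (-‖x‖ ^ 2 / 2) := by
          ring
  have hInt : Integrable (fun x : EuclideanSpace ℝ (Fin d) =>
      (K ^ 2 * (2 * m) ^ (m : ℝ) * (δ ^ E) ^ 2) * Real.exp (-‖x‖ ^ 2 / 2)) :=
    (integrable_gauss d).const_mul _
  have hmono := integral_mono_of_nonneg
    (Filter.Eventually.of_forall fun x => sq_nonneg _) hInt
    (Filter.Eventually.of_forall hpt)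
  rw [integral_const_mul] at hmono
  have heqB : K ^ 2 * (2 * m) ^ (m : ℝ) * (δ ^ E) ^ 2 * J = B * (δ ^ E) ^ 2 := by
    rw [hB]; ring
  have hle : (∫ x : EuclideanSpace ℝ (Fin d),
      ((1 + ‖x‖ ^ 2) ^ (s / 2) * laplacian d (fun y => fδ d δ y ^ α) x) ^ 2)
      ≤ B * (δ ^ E) ^ 2 := by
    rw [← heqB]; exact hmono
  have hsq := Real.sqrt_le_sqrt hle
  rw [Real.sqrt_mul hB0, Real.sqrt_sq hδE.le] at hsq
  calc Real.sqrt (∫ x : EuclideanSpace ℝ (Fin d),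
        ((1 + ‖x‖ ^ 2) ^ (s / 2) * laplacian d (fun y => fδ d δ y ^ α) x) ^ 2)
      ≤ Real.sqrt B * δ ^ E := hsq
    _ ≤ (Real.sqrt B + 1) * δ ^ E := by nlinarith [hδE, Real.sqrt_nonneg B]
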